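/- Fix integer K ≥ 0, λ > 0, and ε ∈ [0,1). Let V(N,q) denote the finite-user individual delivery probability of Theorem 1. If N → ∞ and q → 0 with Nq → λ, then V(N,q) converges to V_∞ = ((1−ε)/(1−εe^{−λ})) e^{−(K+1)λ} ( (1−e^{−λ})(K+1) + ((1−ε)/(1−εe^{−λ})) e^{−λ}(1−(εe^{−λ})^{K+1}) ). -/

import Mathlib

open Filter

/-- Poisson limit: the finite-user individual delivery probability converges to the
infinite-user one as N → ∞, q → 0, Nq → λ. -/
theorem V_tendsto_Vinf
    (K : ℕ) (lam ε : ℝ) (hlam : 0 < lam) (hε0 : 0 ≤ ε) (hε1 : ε < 1)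
    (N : ℕ → ℕ) (q : ℕ → ℝ)
    (hq : ∀ n, 0 < q n ∧ q n < 1) (hN2 : ∀ n, 2 ≤ N n)
    (hN : Tendsto N atTop atTop)
    (hq0 : Tendsto q atTop (nhds 0))
    (hNq : Tendsto (fun n => (N n : ℝ) * q n) atTop (nhds lam)) :
    Tendsto (fun n =>
        (1 - ε) * (1 / (1 + q n)) ^ (N n - 1) * (1 - q n) ^ ((N n - 1) * K) *
          (1 + ε * (1 - q n) ^ (N n - 1) *
                (1 - ε ^ K * (1 - q n) ^ (K * N n)) / (1 - ε * (1 - q n) ^ (N n))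
            + (1 - (1 - q n) ^ (N n - 1)) / (1 - ε * (1 - q n) ^ (N n)) *
                ((1 - (1 - q n) ^ K) / q n -
                  ε * (1 - q n) ^ (N n + K - 1) *
                    (1 - ε ^ K * (1 - q n) ^ ((N n - 1) * K)) /
                      (1 - ε * (1 - q n) ^ (N n - 1)))))
      atTop
      (nhds ((1 - ε) / (1 - ε * Real.exp (-lam)) * Real.exp (-((K : ℝ) + 1) * lam) *
        ((1 - Real.exp (-lam)) * ((K : ℝ) + 1) +
          (1 - ε) / (1 - ε * Real.exp (-lam)) * Real.exp (-lam) *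
            (1 - (ε * Real.exp (-lam)) ^ (K + 1))))) := by
  have hqpos : ∀ n, 0 < q n := fun n => (hq n).1
  have hq1 : ∀ n, q n < 1 := fun n => (hq n).2
  set a := Real.exp (-lam) with ha
  have ha0 : 0 < a := Real.exp_pos _
  have ha1 : a < 1 := by
    rw [ha]
    have : -lam < 0 := by linarith
    calc Real.exp (-lam) < Real.exp 0 := Real.exp_lt_exp.mpr this
      _ = 1 := Real.exp_zero
  have hden : 1 - ε * a ≠ 0 := by nlinarith [mul_nonneg hε0 ha0.le]
  -- slope of log(1+x) at 0
  have hslope_log : Tendsto (fun x : ℝ => Real.log (1 + x) / x)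
      (nhdsWithin 0 {x | x ≠ 0}) (nhds 1) := by
    have h : HasDerivAt (fun x : ℝ => Real.log (1 + x)) 1 0 := by
      have h1 : HasDerivAt (fun x : ℝ => 1 + x) 1 0 := (hasDerivAt_id 0).const_add 1
      simpa using h1.log (by norm_num : (1:ℝ) + 0 ≠ 0)
    have h2 := hasDerivAt_iff_tendsto_slope.mp h
    refine h2.congr' ?_
    filter_upwards [self_mem_nhdsWithin] with x hx
    simp only [slope_fun_def, vsub_eq_sub, smul_eq_mul, sub_zero, add_zero, Real.log_one]
    ring
  -- slope of (1-x)^K at 0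
  have hslope_pow : Tendsto (fun x : ℝ => ((1 - x) ^ K - 1) / x)
      (nhdsWithin 0 {x | x ≠ 0}) (nhds (-(K : ℝ))) := by
    have h : HasDerivAt (fun x : ℝ => (1 - x) ^ K) (-(K : ℝ)) 0 := by
      have := ((hasDerivAt_id (0:ℝ)).const_sub 1).fun_pow K
      simpa using this
    have h2 := hasDerivAt_iff_tendsto_slope.mp h
    refine h2.congr' ?_
    filter_upwards [self_mem_nhdsWithin] with x hx
    simp only [slope_fun_def, vsub_eq_sub, smul_eq_mul, sub_zero, sub_zero]
    norm_num
    ring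
  have hposq : Tendsto q atTop (nhdsWithin 0 {x | x ≠ 0}) :=
    tendsto_nhdsWithin_of_tendsto_nhds_of_eventually_within _ hq0
      (Eventually.of_forall fun n => (hqpos n).ne')
  have hnegq : Tendsto (fun n => -q n) atTop (nhdsWithin 0 {x | x ≠ 0}) :=
    tendsto_nhdsWithin_of_tendsto_nhds_of_eventually_within _ (by simpa using hq0.neg)
      (Eventually.of_forall fun n => by simpa using (hqpos n).ne')
  have hlog1m : Tendsto (fun n => Real.log (1 - q n) / q n) atTop (nhds (-1)) := by
    have h := (hslope_log.comp hnegq).neg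
    rw [show -(1:ℝ) = -1 from rfl] at h
    refine h.congr fun n => ?_
    simp only [Function.comp_apply]
    rw [show (1:ℝ) + -q n = 1 - q n from by ring]
    field_simp
  have hlog1p : Tendsto (fun n => Real.log (1 + q n) / q n) atTop (nhds 1) :=
    (hslope_log.comp hposq).congr fun n => rfl
  have hKq : Tendsto (fun n => (1 - (1 - q n) ^ K) / q n) atTop (nhds (K : ℝ)) := by
    have h := (hslope_pow.comp hposq).neg
    rw [neg_neg] at h
    refine h.congr fun n => ?_
    simp only [Function.comp_apply]
    ring
  have hNcast : ∀ n, ((N n - 1 : ℕ) : ℝ) = (N n : ℝ) - 1 := fun n => by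
    have h := hN2 n
    push_cast [Nat.cast_sub (by omega : 1 ≤ N n)]
    ring
  have hN1q : Tendsto (fun n => ((N n : ℝ) - 1) * q n) atTop (nhds lam) := by
    have h := hNq.sub hq0
    rw [sub_zero] at h
    exact h.congr fun n => by ring
  -- (1-q)^N → a
  have hB1 : Tendsto (fun n => (1 - q n) ^ N n) atTop (nhds a) := by
    have hNlog : Tendsto (fun n => (N n : ℝ) * Real.log (1 - q n)) atTop (nhds (-lam)) := by
      have h := hNq.mul hlog1m
      rw [show lam * -1 = -lam from by ring] at h
      refine h.congr fun n => ?_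
      have hqn : q n ≠ 0 := (hqpos n).ne'
      field_simp
    have h := (Real.continuous_exp.tendsto _).comp hNlog
    refine h.congr fun n => ?_
    simp only [Function.comp_apply]
    rw [Real.exp_nat_mul, Real.exp_log (by linarith [hq1 n] : (0:ℝ) < 1 - q n)]
  -- (1-q)^(N-1) → a
  have hB2 : Tendsto (fun n => (1 - q n) ^ (N n - 1)) atTop (nhds a) := by
    have hNlog : Tendsto (fun n => ((N n - 1 : ℕ) : ℝ) * Real.log (1 - q n)) atTop
        (nhds (-lam)) := by
      have h := hN1q.mul hlog1m
      rw [show lam * -1 = -lam from by ring] at h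
      refine h.congr fun n => ?_
      rw [hNcast n]
      have hqn : q n ≠ 0 := (hqpos n).ne'
      field_simp
    have h := (Real.continuous_exp.tendsto _).comp hNlog
    refine h.congr fun n => ?_
    simp only [Function.comp_apply]
    rw [Real.exp_nat_mul, Real.exp_log (by linarith [hq1 n] : (0:ℝ) < 1 - q n)]
  -- (1/(1+q))^(N-1) → a
  have hB3 : Tendsto (fun n => (1 / (1 + q n)) ^ (N n - 1)) atTop (nhds a) := by
    have hNlog : Tendsto (fun n => ((N n - 1 : ℕ) : ℝ) * Real.log (1 / (1 + q n))) atTop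
        (nhds (-lam)) := by
      have h := (hN1q.mul hlog1p).neg
      rw [show -(lam * 1) = -lam from by ring] at h
      refine h.congr fun n => ?_
      rw [hNcast n, one_div, Real.log_inv]
      have hqn : q n ≠ 0 := (hqpos n).ne'
      field_simp
    have h := (Real.continuous_exp.tendsto _).comp hNlog
    refine h.congr fun n => ?_
    simp only [Function.comp_apply]
    rw [Real.exp_nat_mul, Real.exp_log (by have := hqpos n; positivity : (0:ℝ) < 1 / (1 + q n))]
  -- (1-q)^K → 1
  have hB4 : Tendsto (fun n => (1 - q n) ^ K) atTop (nhds 1) := by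
    have h := (tendsto_const_nhds.sub hq0 : Tendsto (fun n => 1 - q n) atTop (nhds (1 - 0))).pow K
    simpa using h
  -- derived powers
  have hKN : Tendsto (fun n => (1 - q n) ^ (K * N n)) atTop (nhds (a ^ K)) :=
    (hB1.pow K).congr fun n => by rw [← pow_mul, Nat.mul_comm]
  have hN1K : Tendsto (fun n => (1 - q n) ^ ((N n - 1) * K)) atTop (nhds (a ^ K)) :=
    (hB2.pow K).congr fun n => (pow_mul _ _ _).symm
  have hNK1 : Tendsto (fun n => (1 - q n) ^ (N n + K - 1)) atTop (nhds a) := by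
    have h := hB2.mul hB4
    rw [mul_one] at h
    refine h.congr fun n => ?_
    rw [← pow_add]
    congr 1
    have := hN2 n
    omega
  -- denominators
  have hd1 : Tendsto (fun n => 1 - ε * (1 - q n) ^ N n) atTop (nhds (1 - ε * a)) :=
    tendsto_const_nhds.sub (tendsto_const_nhds.mul hB1)
  have hd2 : Tendsto (fun n => 1 - ε * (1 - q n) ^ (N n - 1)) atTop (nhds (1 - ε * a)) :=
    tendsto_const_nhds.sub (tendsto_const_nhds.mul hB2)
  -- assemble
  have hT1 : Tendsto (fun n => ε * (1 - q n) ^ (N n - 1) *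
      (1 - ε ^ K * (1 - q n) ^ (K * N n)) / (1 - ε * (1 - q n) ^ N n)) atTop
      (nhds (ε * a * (1 - ε ^ K * a ^ K) / (1 - ε * a))) :=
    ((tendsto_const_nhds.mul hB2).mul
      (tendsto_const_nhds.sub (tendsto_const_nhds.mul hKN))).div hd1 hden
  have hinner : Tendsto (fun n => (1 - (1 - q n) ^ K) / q n -
      ε * (1 - q n) ^ (N n + K - 1) * (1 - ε ^ K * (1 - q n) ^ ((N n - 1) * K)) /
        (1 - ε * (1 - q n) ^ (N n - 1))) atTop
      (nhds ((K : ℝ) - ε * a * (1 - ε ^ K * a ^ K) / (1 - ε * a))) :=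
    hKq.sub (((tendsto_const_nhds.mul hNK1).mul
      (tendsto_const_nhds.sub (tendsto_const_nhds.mul hN1K))).div hd2 hden)
  have hT2 : Tendsto (fun n => (1 - (1 - q n) ^ (N n - 1)) / (1 - ε * (1 - q n) ^ N n) *
      ((1 - (1 - q n) ^ K) / q n -
        ε * (1 - q n) ^ (N n + K - 1) * (1 - ε ^ K * (1 - q n) ^ ((N n - 1) * K)) /
          (1 - ε * (1 - q n) ^ (N n - 1)))) atTop
      (nhds ((1 - a) / (1 - ε * a) *
        ((K : ℝ) - ε * a * (1 - ε ^ K * a ^ K) / (1 - ε * a)))) :=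
    (((tendsto_const_nhds.sub hB2).div hd1 hden).mul hinner)
  have hc1 : Tendsto (fun _ : ℕ => (1 - ε : ℝ)) atTop (nhds (1 - ε)) := tendsto_const_nhds
  have hc2 : Tendsto (fun _ : ℕ => (1 : ℝ)) atTop (nhds 1) := tendsto_const_nhds
  have whole := ((hc1.mul hB3).mul hN1K).mul ((hc2.add hT1).add hT2)
  have key : (1 - ε) / (1 - ε * a) * Real.exp (-((K : ℝ) + 1) * lam) *
        ((1 - a) * ((K : ℝ) + 1) +
          (1 - ε) / (1 - ε * a) * a *
            (1 - (ε * a) ^ (K + 1))) =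
      (1 - ε) * a * a ^ K *
        (1 + ε * a * (1 - ε ^ K * a ^ K) / (1 - ε * a) +
          (1 - a) / (1 - ε * a) *
            ((K : ℝ) - ε * a * (1 - ε ^ K * a ^ K) / (1 - ε * a))) := by
    have hexp : Real.exp (-((K : ℝ) + 1) * lam) = a ^ (K + 1) := by
      rw [ha, ← Real.exp_nat_mul]
      congr 1
      push_cast
      ring
    rw [hexp]
    field_simp
    ring
  rw [key]
  exact whole
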